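/- Let f = f_A + f_R : [0,∞) → ℝ be continuous and strictly decreasing on [0,d_e] for some d_e > 0. Let r ∈ [0,d_e) and R_e > 0 be such that w₁(φ,R,r) ≤ d_e for all φ ∈ [0,π] and all R ∈ [0,R_e]. Define G(R,r) = ∫₀^π f(w₁(φ,R,r)) (1 − cos φ)(R² + R r cos² φ) dφ. If G(R_e,r) < 0 and both G₁(0,r) > 0 and G₂(0,r) > 0, then there exists R ∈ (0,R_e) with G(R,r) = 0. -/

import Mathlib

open Real

/-- `w₁(φ,R,r) = √(R²(1 − cos φ)² + (R+r)² sin² φ)`. -/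
noncomputable def w1 (φ R r : ℝ) : ℝ :=
  Real.sqrt (R ^ 2 * (1 - Real.cos φ) ^ 2 + (R + r) ^ 2 * Real.sin φ ^ 2)

/-- `G₁(R,r) = ∫₀^π f(w₁(φ,R,r)) (1 − cos φ) dφ`. -/
noncomputable def G1 (f : ℝ → ℝ) (R r : ℝ) : ℝ :=
  ∫ φ in (0:ℝ)..Real.pi, f (w1 φ R r) * (1 - Real.cos φ)

/-- `G₂(R,r) = ∫₀^π f(w₁(φ,R,r)) (1 − cos φ) cos² φ dφ`. -/
noncomputable def G2 (f : ℝ → ℝ) (R r : ℝ) : ℝ :=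
  ∫ φ in (0:ℝ)..Real.pi, f (w1 φ R r) * (1 - Real.cos φ) * Real.cos φ ^ 2

/-- `G(R,r) = ∫₀^π f(w₁(φ,R,r)) (1 − cos φ)(R² + R r cos² φ) dφ`. -/
noncomputable def Gfun (f : ℝ → ℝ) (R r : ℝ) : ℝ :=
  ∫ φ in (0:ℝ)..Real.pi,
    f (w1 φ R r) * (1 - Real.cos φ) * (R ^ 2 + R * r * Real.cos φ ^ 2)

lemma w1_nonneg (φ R r : ℝ) : 0 ≤ w1 φ R r := Real.sqrt_nonneg _

lemma w1_cont2 (r : ℝ) : Continuous fun p : ℝ × ℝ => w1 p.2 p.1 r := by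
  unfold w1; fun_prop

lemma w1_cont1 (R r : ℝ) : Continuous fun φ => w1 φ R r := by
  unfold w1; fun_prop

lemma Fcont {f : ℝ → ℝ} (hf : ContinuousOn f (Set.Ici 0)) :
    Continuous fun x => f (max x 0) :=
  hf.comp_continuous (continuous_id.max continuous_const) fun x => Set.mem_Ici.mpr (le_max_right _ _)

lemma fw1_eq (f : ℝ → ℝ) (φ R r : ℝ) : f (w1 φ R r) = f (max (w1 φ R r) 0) := by
  rw [max_eq_left (w1_nonneg φ R r)]

lemma fw1_cont1 {f : ℝ → ℝ} (hf : ContinuousOn f (Set.Ici 0)) (R r : ℝ) :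
    Continuous fun φ => f (w1 φ R r) := by
  have : (fun φ => f (w1 φ R r)) = (fun x => f (max x 0)) ∘ fun φ => w1 φ R r := by
    ext φ; exact fw1_eq f φ R r
  rw [this]
  exact (Fcont hf).comp (w1_cont1 R r)

lemma int1 {f : ℝ → ℝ} (hf : ContinuousOn f (Set.Ici 0)) (R r : ℝ) :
    IntervalIntegrable (fun φ => f (w1 φ R r) * (1 - Real.cos φ)) MeasureTheory.volume 0 Real.pi :=
  ((fw1_cont1 hf R r).mul (by fun_prop)).intervalIntegrable _ _

lemma int2 {f : ℝ → ℝ} (hf : ContinuousOn f (Set.Ici 0)) (R r : ℝ) :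
    IntervalIntegrable (fun φ => f (w1 φ R r) * (1 - Real.cos φ) * Real.cos φ ^ 2)
      MeasureTheory.volume 0 Real.pi :=
  (((fw1_cont1 hf R r).mul (by fun_prop)).mul (by fun_prop)).intervalIntegrable _ _

lemma Gsplit {f : ℝ → ℝ} (hf : ContinuousOn f (Set.Ici 0)) (R r : ℝ) :
    Gfun f R r = R ^ 2 * G1 f R r + R * r * G2 f R r := by
  unfold Gfun G1 G2
  rw [← intervalIntegral.integral_const_mul, ← intervalIntegral.integral_const_mul,
    ← intervalIntegral.integral_add ((int1 hf R r).const_mul _) ((int2 hf R r).const_mul _)]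
  congr 1; ext φ; ring

lemma G1cont {f : ℝ → ℝ} (hf : ContinuousOn f (Set.Ici 0)) (r : ℝ) :
    Continuous fun R => G1 f R r := by
  have h : Continuous fun R => ∫ φ in (0:ℝ)..Real.pi,
      f (max (w1 φ R r) 0) * (1 - Real.cos φ) := by
    apply intervalIntegral.continuous_parametric_intervalIntegral_of_continuous'
    show Continuous fun p : ℝ × ℝ => f (max (w1 p.2 p.1 r) 0) * (1 - Real.cos p.2)
    exact ((Fcont hf).comp (w1_cont2 r)).mul (by fun_prop)
  have he : ∀ R, G1 f R r = ∫ φ in (0:ℝ)..Real.pi, f (max (w1 φ R r) 0) * (1 - Real.cos φ) := by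
    intro R; unfold G1; congr 1; ext φ; rw [fw1_eq f φ R r]
  simpa only [← he] using h

lemma G2cont {f : ℝ → ℝ} (hf : ContinuousOn f (Set.Ici 0)) (r : ℝ) :
    Continuous fun R => G2 f R r := by
  have h : Continuous fun R => ∫ φ in (0:ℝ)..Real.pi,
      f (max (w1 φ R r) 0) * (1 - Real.cos φ) * Real.cos φ ^ 2 := by
    apply intervalIntegral.continuous_parametric_intervalIntegral_of_continuous'
    show Continuous fun p : ℝ × ℝ =>
      f (max (w1 p.2 p.1 r) 0) * (1 - Real.cos p.2) * Real.cos p.2 ^ 2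
    exact (((Fcont hf).comp (w1_cont2 r)).mul (by fun_prop)).mul (by fun_prop)
  have he : ∀ R, G2 f R r = ∫ φ in (0:ℝ)..Real.pi,
      f (max (w1 φ R r) 0) * (1 - Real.cos φ) * Real.cos φ ^ 2 := by
    intro R; unfold G2; congr 1; ext φ; rw [fw1_eq f φ R r]
  simpa only [← he] using h

/-- If `f = f_A + f_R` is continuous and strictly decreasing on
`[0,d_e]`, `r ∈ [0,d_e)` and `R_e > 0` satisfy `w₁(φ,R,r) ≤ d_e` for all
`φ ∈ [0,π]`, `R ∈ [0,R_e]`, and `G(R_e,r) < 0`, `G₁(0,r) > 0`, `G₂(0,r) > 0`,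
then there exists `R ∈ (0,R_e)` with `G(R,r) = 0`. -/
theorem ellipse_equilibrium_exists
    (f : ℝ → ℝ) (hf : ContinuousOn f (Set.Ici 0))
    (de : ℝ) (hde : 0 < de)
    (hdec : StrictAntiOn f (Set.Icc 0 de))
    (r : ℝ) (hr : r ∈ Set.Ico (0:ℝ) de) (Re : ℝ) (hRe : 0 < Re)
    (hw : ∀ φ ∈ Set.Icc (0:ℝ) Real.pi, ∀ R ∈ Set.Icc (0:ℝ) Re, w1 φ R r ≤ de)
    (hGRe : Gfun f Re r < 0)
    (hG1 : 0 < G1 f 0 r) (hG2 : 0 < G2 f 0 r) :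
    ∃ R ∈ Set.Ioo (0:ℝ) Re, Gfun f R r = 0 := by
  have ivt : ∀ h : ℝ → ℝ, Continuous h → 0 < h 0 → h Re < 0 →
      ∃ R ∈ Set.Ioo (0:ℝ) Re, h R = 0 := by
    intro h hc h0 hRe'
    have hm : (0:ℝ) ∈ Set.Ioo (h Re) (h 0) := ⟨hRe', h0⟩
    obtain ⟨R, hR, hR0⟩ := intermediate_value_Ioo' hRe.le hc.continuousOn hm
    exact ⟨R, hR, hR0⟩
  rcases eq_or_lt_of_le hr.1 with hr0 | hr0
  · subst hr0
    obtain ⟨R, hR, hR0⟩ := ivt (fun R => G1 f R 0) (G1cont hf 0) hG1 (by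
      have := Gsplit hf Re 0
      nlinarith [sq_nonneg Re])
    refine ⟨R, hR, ?_⟩
    rw [Gsplit hf, hR0]; ring
  · obtain ⟨R, hR, hR0⟩ := ivt (fun R => R * G1 f R r + r * G2 f R r)
      ((continuous_id.mul (G1cont hf r)).add (continuous_const.mul (G2cont hf r)))
      (by show (0:ℝ) < 0 * G1 f 0 r + r * G2 f 0 r; nlinarith)
      (by show Re * G1 f Re r + r * G2 f Re r < 0; have := Gsplit hf Re r; nlinarith)
    refine ⟨R, hR, ?_⟩
    rw [Gsplit hf]
    linear_combination R * hR0
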